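/- If X is a Gaussian random variable with mean μ and variance 1, |μ| ≤ M, and k ≤ M², then E[H_k(X)²] ≤ (2M²)^k, where H_k is the Hermite polynomial of degree k. -/

import Mathlib

open MeasureTheory ProbabilityTheory Polynomial

open Real Filter Topology
open scoped ENNReal NNReal


theorem deriv_hermite_int (n : ℕ) :
    derivative (hermite (n+1)) = ((n : Polynomial ℤ)+1) * hermite n := by
  induction n with
  | zero => simp [hermite_one, hermite_zero]
  | succ n ih =>
    rw [hermite_succ (n+1), derivative_sub, derivative_mul, derivative_X, ih,
      hermite_succ, derivative_mul]
    simp only [derivative_natCast, derivative_add, derivative_one, add_zero, zero_mul]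
    push_cast
    ring

noncomputable def Hp (n : ℕ) : Polynomial ℝ := (hermite n).map (Int.castRingHom ℝ)

lemma aeval_hermite_eq (n : ℕ) (x : ℝ) : (aeval x (hermite n) : ℝ) = eval x (Hp n) := by
  rw [Hp, eval_map, aeval_def]
  norm_num

lemma Hp_zero : Hp 0 = 1 := by simp [Hp, hermite_zero]

lemma Hp_succ (n : ℕ) : Hp (n+1) = X * Hp n - derivative (Hp n) := by
  rw [Hp, hermite_succ, Polynomial.map_sub, Polynomial.map_mul, map_X, ← derivative_map]
  rfl

lemma derivative_Hp (n : ℕ) : derivative (Hp n) = C (n : ℝ) * Hp (n - 1) := by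
  cases n with
  | zero => simp [Hp_zero]
  | succ n =>
    rw [Hp, derivative_map, deriv_hermite_int, Polynomial.map_mul, Polynomial.map_add,
      Polynomial.map_natCast, Polynomial.map_one]
    push_cast
    rw [map_add, map_one, C_eq_natCast]
    rfl

lemma gpdf_eq (μ : ℝ) (x : ℝ) :
    gaussianPDFReal μ 1 x = (√(2*π))⁻¹ * rexp (-(x-μ)^2/2) := by
  simp [gaussianPDFReal]

lemma hasDerivAt_gpdf (μ x : ℝ) :
    HasDerivAt (gaussianPDFReal μ 1) ((μ - x) * gaussianPDFReal μ 1 x) x := by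
  have h1 : HasDerivAt (fun x : ℝ => -(x-μ)^2/2) (μ - x) x := by
    have h := (((hasDerivAt_id x).sub_const μ).pow 2).neg.div_const 2
    refine h.congr_deriv ?_
    simp only [id_eq]
    push_cast
    ring
  have h2 := (h1.exp).const_mul (√(2*π))⁻¹
  have he : (fun x : ℝ => (√(2*π))⁻¹ * rexp (-(x-μ)^2/2)) = gaussianPDFReal μ 1 := by
    funext y; rw [gpdf_eq]
  rw [he] at h2
  refine h2.congr_deriv ?_
  rw [gpdf_eq]
  ring

lemma tendsto_poly_gauss_atTop (p : Polynomial ℝ) :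
    Tendsto (fun x => eval x p * rexp (-x^2/2)) atTop (𝓝 0) := by
  have h : Tendsto (fun x => |eval x p / rexp x|) atTop (𝓝 0) := by
    simpa using (p.tendsto_div_exp_atTop).abs
  apply squeeze_zero_norm' _ h
  filter_upwards [eventually_ge_atTop (2:ℝ)] with x hx
  have h1 : rexp (-x^2/2) ≤ rexp (-x) := by
    apply Real.exp_le_exp.2
    nlinarith
  calc ‖eval x p * rexp (-x^2/2)‖ = |eval x p| * rexp (-x^2/2) := by
        rw [norm_mul, Real.norm_eq_abs, Real.norm_eq_abs, abs_of_pos (Real.exp_pos _)]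
    _ ≤ |eval x p| * rexp (-x) := by
        exact mul_le_mul_of_nonneg_left h1 (abs_nonneg _)
    _ = |eval x p / rexp x| := by
        rw [abs_div, abs_of_pos (Real.exp_pos x), Real.exp_neg, div_eq_mul_inv]

lemma tendsto_poly_gauss_atBot (p : Polynomial ℝ) :
    Tendsto (fun x => eval x p * rexp (-x^2/2)) atBot (𝓝 0) := by
  have h := (tendsto_poly_gauss_atTop (p.comp (-X))).comp tendsto_neg_atBot_atTop
  convert h using 2 with x
  simp [Function.comp, eval_comp]

lemma tendsto_F_atTop (μ : ℝ) (p : Polynomial ℝ) :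
    Tendsto (fun x => eval x p * gaussianPDFReal μ 1 x) atTop (𝓝 0) := by
  have h := ((tendsto_poly_gauss_atTop (p.comp (X + C μ))).comp
    (tendsto_atTop_add_const_right atTop (-μ) tendsto_id)).const_mul (√(2*π))⁻¹
  rw [mul_zero] at h
  convert h using 2 with x
  simp only [Function.comp, gpdf_eq, eval_comp, eval_add, eval_X, eval_C, id_eq]
  ring_nf

lemma tendsto_F_atBot (μ : ℝ) (p : Polynomial ℝ) :
    Tendsto (fun x => eval x p * gaussianPDFReal μ 1 x) atBot (𝓝 0) := by
  have h := ((tendsto_poly_gauss_atBot (p.comp (X + C μ))).comp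
    (tendsto_atBot_add_const_right atBot (-μ) tendsto_id)).const_mul (√(2*π))⁻¹
  rw [mul_zero] at h
  convert h using 2 with x
  simp only [Function.comp, gpdf_eq, eval_comp, eval_add, eval_X, eval_C, id_eq]
  ring_nf


lemma integrable_poly_gauss0 (p : Polynomial ℝ) :
    Integrable fun x => eval x p * rexp (-x^2/2) := by
  have he : (fun x => eval x p * rexp (-x^2/2)) =
      fun x => ∑ i ∈ Finset.range (p.natDegree+1), p.coeff i * (x^i * rexp (-x^2/2)) := by
    funext x
    rw [eval_eq_sum_range, Finset.sum_mul]
    congr 1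
    funext i
    ring
  rw [he]
  apply integrable_finset_sum
  intro i _
  apply Integrable.const_mul
  have h := integrable_rpow_mul_exp_neg_mul_sq (b := (1/2:ℝ)) (by norm_num)
    (s := (i:ℝ)) (by linarith [Nat.cast_nonneg (α := ℝ) i])
  have h2 : (fun x : ℝ => x ^ (i:ℝ) * rexp (-(1/2) * x^2)) = fun x => x ^ i * rexp (-x^2/2) := by
    funext x
    rw [Real.rpow_natCast]
    congr 1
    congr 1
    ring
  rwa [h2] at h

lemma integrable_poly_gauss (μ : ℝ) (p : Polynomial ℝ) :
    Integrable fun x => eval x p * gaussianPDFReal μ 1 x := by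
  have h := (((integrable_poly_gauss0 (p.comp (X + C μ))).const_mul
    (√(2*π))⁻¹).comp_sub_right μ)
  convert h using 1
  funext x
  simp only [gpdf_eq, eval_comp, eval_add, eval_X, eval_C]
  ring_nf

lemma gaussianReal_one_eq (μ' : ℝ) : gaussianReal μ' 1 =
    (volume : Measure ℝ).withDensity (fun x => ((gaussianPDFReal μ' 1 x).toNNReal : ℝ≥0∞)) := by
  rw [gaussianReal_of_var_ne_zero _ one_ne_zero]
  rfl

lemma integral_gaussianReal_poly (μ : ℝ) (p : Polynomial ℝ) :
    ∫ x, eval x p ∂(gaussianReal μ 1) = ∫ x, eval x p * gaussianPDFReal μ 1 x := by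
  rw [gaussianReal_one_eq μ, integral_withDensity_eq_integral_smul
    ((measurable_gaussianPDFReal μ 1).real_toNNReal) _]
  congr 1
  funext x
  rw [NNReal.smul_def, Real.coe_toNNReal _ (gaussianPDFReal_nonneg μ 1 x), smul_eq_mul, mul_comm]

lemma integrable_gaussianReal_poly (μ : ℝ) (p : Polynomial ℝ) :
    Integrable (fun x => eval x p) (gaussianReal μ 1) := by
  rw [gaussianReal_one_eq μ, integrable_withDensity_iff_integrable_smul
    ((measurable_gaussianPDFReal μ 1).real_toNNReal)]
  have h := integrable_poly_gauss μ p
  refine h.congr (Filter.Eventually.of_forall fun x => ?_)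
  dsimp only
  rw [NNReal.smul_def, Real.coe_toNNReal _ (gaussianPDFReal_nonneg μ 1 x), smul_eq_mul, mul_comm]

lemma integral_line_deriv_zero (F F' : ℝ → ℝ) (hF : ∀ x, HasDerivAt F (F' x) x)
    (hi : Integrable F') (ht : Tendsto F atTop (𝓝 0)) (hb : Tendsto F atBot (𝓝 0)) :
    ∫ x, F' x = 0 := by
  have h1 : ∫ x in Set.Iic 0, F' x = F 0 - 0 :=
    MeasureTheory.integral_Iic_of_hasDerivAt_of_tendsto' (fun x _ => hF x) hi.integrableOn hb
  have h2 : ∫ x in Set.Ioi 0, F' x = 0 - F 0 :=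
    MeasureTheory.integral_Ioi_of_hasDerivAt_of_tendsto' (fun x _ => hF x) hi.integrableOn ht
  rw [← intervalIntegral.integral_Iic_add_Ioi (b := (0:ℝ)) hi.integrableOn hi.integrableOn, h1, h2]
  ring

lemma stein (μ : ℝ) (p : Polynomial ℝ) :
    ∫ x, eval x (X * p) ∂(gaussianReal μ 1) =
      μ * ∫ x, eval x p ∂(gaussianReal μ 1) + ∫ x, eval x (derivative p) ∂(gaussianReal μ 1) := by
  have key : ∫ x, eval x (derivative p + (C μ - X) * p) * gaussianPDFReal μ 1 x = 0 := by
    apply integral_line_deriv_zero (fun x => eval x p * gaussianPDFReal μ 1 x)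
    · intro x
      have h := (p.hasDerivAt x).mul (hasDerivAt_gpdf μ x)
      refine h.congr_deriv ?_
      simp only [eval_add, eval_mul, eval_sub, eval_C, eval_X]
      ring
    · exact integrable_poly_gauss μ _
    · exact tendsto_F_atTop μ p
    · exact tendsto_F_atBot μ p
  have hsplit : ∀ x : ℝ, eval x (derivative p + (C μ - X) * p) * gaussianPDFReal μ 1 x =
      eval x (derivative p) * gaussianPDFReal μ 1 x + μ * (eval x p * gaussianPDFReal μ 1 x)
        - eval x (X * p) * gaussianPDFReal μ 1 x := by
    intro x
    simp only [eval_add, eval_mul, eval_sub, eval_C, eval_X]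
    ring
  simp_rw [hsplit] at key
  have hd := integrable_poly_gauss μ (derivative p)
  have hp := (integrable_poly_gauss μ p).const_mul μ
  have hxp := integrable_poly_gauss μ (X * p)
  have hsum : Integrable (fun x => eval x (derivative p) * gaussianPDFReal μ 1 x
      + μ * (eval x p * gaussianPDFReal μ 1 x)) := hd.add hp
  rw [integral_sub hsum hxp, integral_add hd hp, integral_const_mul] at key
  rw [integral_gaussianReal_poly, integral_gaussianReal_poly, integral_gaussianReal_poly]
  linarith

noncomputable def T (μ : ℝ) (m n : ℕ) : ℝ := ∫ x, eval x (Hp m * Hp n) ∂(gaussianReal μ 1)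

lemma T_symm (μ : ℝ) (m n : ℕ) : T μ m n = T μ n m := by rw [T, T, mul_comm]

lemma T_rec (μ : ℝ) (m n : ℕ) : T μ (m+1) n = μ * T μ m n + n * T μ m (n-1) := by
  have h1 : Hp (m+1) * Hp n = X * (Hp m * Hp n) - derivative (Hp m) * Hp n := by
    rw [Hp_succ]; ring
  have h2 : ∀ q r : Polynomial ℝ, ∫ x, eval x (q - r) ∂(gaussianReal μ 1) =
      (∫ x, eval x q ∂(gaussianReal μ 1)) - ∫ x, eval x r ∂(gaussianReal μ 1) := by
    intro q r
    simp_rw [eval_sub]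
    exact integral_sub (integrable_gaussianReal_poly μ q) (integrable_gaussianReal_poly μ r)
  have h3 : ∀ q r : Polynomial ℝ, ∫ x, eval x (q + r) ∂(gaussianReal μ 1) =
      (∫ x, eval x q ∂(gaussianReal μ 1)) + ∫ x, eval x r ∂(gaussianReal μ 1) := by
    intro q r
    simp_rw [eval_add]
    exact integral_add (integrable_gaussianReal_poly μ q) (integrable_gaussianReal_poly μ r)
  rw [T, h1, h2, stein μ (Hp m * Hp n), derivative_mul, h3]
  rw [derivative_Hp n]
  have h4 : ∫ x, eval x (Hp m * (C (n:ℝ) * Hp (n-1))) ∂(gaussianReal μ 1) =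
      (n : ℝ) * T μ m (n-1) := by
    rw [T, ← integral_const_mul]
    congr 1
    funext x
    simp only [eval_mul, eval_C]
    ring
  rw [h4, T, T]
  ring

lemma T_zero_right (μ : ℝ) (m : ℕ) : T μ m 0 = μ ^ m := by
  induction m with
  | zero =>
    rw [T, Hp_zero]
    simp
  | succ m ih =>
    rw [T_rec, ih]
    simp [pow_succ]
    ring

lemma T_bound (μ M : ℝ) (hμ : |μ| ≤ M) (hM : 0 < M) :
    ∀ m n, |T μ m n| ≤ M^(m+n) * (1 + n / M^2)^m := by
  intro m
  induction m with
  | zero =>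
    intro n
    rw [T_symm, T_zero_right, abs_pow]
    simpa using pow_le_pow_left₀ (abs_nonneg μ) hμ n
  | succ m ih =>
    intro n
    match n with
    | 0 =>
      rw [T_zero_right, abs_pow]
      simpa using pow_le_pow_left₀ (abs_nonneg μ) hμ (m+1)
    | (n+1) =>
      have hM2 : (0:ℝ) < M^2 := by positivity
      have hA0 : (0:ℝ) ≤ 1 + (n:ℝ) / M^2 := by positivity
      have hA0' : (0:ℝ) ≤ 1 + ((n:ℝ)+1) / M^2 := by positivity
      have hAle : 1 + (n:ℝ) / M^2 ≤ 1 + ((n:ℝ)+1) / M^2 := by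
        gcongr
        linarith
      have hpow : (1 + (n:ℝ)/M^2)^m ≤ (1 + ((n:ℝ)+1)/M^2)^m :=
        pow_le_pow_left₀ hA0 hAle m
      have h1 := ih (n+1)
      have h2 := ih n
      have hrec := T_rec μ m (n+1)
      simp only [Nat.add_sub_cancel] at hrec
      rw [hrec]
      push_cast
      push_cast at h1
      have habs : |μ * T μ m (n+1) + ((n:ℝ)+1) * T μ m n|
          ≤ M * |T μ m (n+1)| + ((n:ℝ)+1) * |T μ m n| := by
        refine (abs_add_le _ _).trans ?_
        rw [abs_mul, abs_mul]
        gcongr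
        rw [abs_of_nonneg (by positivity)]
      refine habs.trans ?_
      have hn1 : (0:ℝ) ≤ (n:ℝ)+1 := by positivity
      calc M * |T μ m (n+1)| + ((n:ℝ)+1) * |T μ m n|
          ≤ M * (M^(m+(n+1)) * (1 + ((n:ℝ)+1)/M^2)^m)
            + ((n:ℝ)+1) * (M^(m+n) * (1 + ((n:ℝ)+1)/M^2)^m) := by
            gcongr
            refine h2.trans ?_
            gcongr
        _ = M^((m+1)+(n+1)) * (1 + ((n:ℝ)+1)/M^2)^(m+1) := by
            have hMA : M^2 * (1 + ((n:ℝ)+1)/M^2) = M^2 + ((n:ℝ)+1) := by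
              rw [mul_add, mul_one, mul_comm (M^2), div_mul_cancel₀ _ hM2.ne']
            rw [show M^((m+1)+(n+1)) * (1 + ((n:ℝ)+1)/M^2)^(m+1) = M^(m+n) * (1 + ((n:ℝ)+1)/M^2)^m * (M^2 * (1 + ((n:ℝ)+1)/M^2)) by ring, hMA]
            ring

/-- If `X ~ N(μ, 1)`, `|μ| ≤ M` and `k ≤ M ^ 2`, then `E[H_k(X)²] ≤ (2 M²)^k`, where
`H_k` is the probabilists' Hermite polynomial of degree `k`. -/
theorem expectation_hermite_sq_gaussian_le (μ M : ℝ) (k : ℕ)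
    (hμ : |μ| ≤ M) (hk : (k : ℝ) ≤ M ^ 2) :
    ∫ x, (aeval x (hermite k) : ℝ) ^ 2 ∂(gaussianReal μ 1) ≤ (2 * M ^ 2) ^ k := by
  have hM0 : 0 ≤ M := le_trans (abs_nonneg μ) hμ
  rcases hM0.eq_or_lt with h | hM
  · have hk0 : k = 0 := by
      have h2 : (k:ℝ) ≤ 0 := by rw [← h] at hk; simpa using hk
      exact_mod_cast le_antisymm (by exact_mod_cast h2) (Nat.zero_le k)
    subst hk0
    simp [hermite_zero]
  · have heq : ∫ x, (aeval x (hermite k) : ℝ) ^ 2 ∂(gaussianReal μ 1) = T μ k k := by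
      rw [T]
      congr 1
      funext x
      rw [aeval_hermite_eq, eval_mul]
      ring
    rw [heq]
    refine (le_abs_self _).trans ((T_bound μ M hμ hM k k).trans ?_)
    have h2 : 1 + (k:ℝ)/M^2 ≤ 2 := by
      have h3 : (k:ℝ)/M^2 ≤ 1 := by
        rw [div_le_one (by positivity)]
        exact hk
      linarith
    calc M^(k+k) * (1 + (k:ℝ)/M^2)^k ≤ M^(k+k) * 2^k := by
          gcongr
      _ = (2*M^2)^k := by rw [mul_pow]; ring
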